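/- Let A, B ∈ ℝ^{m×n} with rank(A) = rank(B). Then the Moore–Penrose pseudoinverses satisfy ‖A† − B†‖₂ ≤ 2 ‖A†‖₂ ‖B†‖₂ ‖A − B‖₂. -/

import Mathlib

open Matrix BigOperators RealInnerProductSpace MeasureTheory

noncomputable def specNorm {m n : ℕ} (A : Matrix (Fin m) (Fin n) ℝ) : ℝ :=
  ‖LinearMap.toContinuousLinearMap (Matrix.toEuclideanLin A)‖

def IsMPInv {m n : ℕ} (A : Matrix (Fin m) (Fin n) ℝ) (B : Matrix (Fin n) (Fin m) ℝ) : Prop :=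
  A * B * A = A ∧ B * A * B = B ∧ (A * B)ᵀ = A * B ∧ (B * A)ᵀ = B * A

noncomputable def rowNorm {m n : ℕ} (A : Matrix (Fin m) (Fin n) ℝ) (i : Fin m) : ℝ :=
  Real.sqrt (∑ j, (A i j) ^ 2)

noncomputable def entryMax {m n : ℕ} (A : Matrix (Fin m) (Fin n) ℝ) : ℝ :=
  ⨆ i, ⨆ j, |A i j|

noncomputable def clm {k l : ℕ} (M : Matrix (Fin k) (Fin l) ℝ) :
    EuclideanSpace ℝ (Fin l) →L[ℝ] EuclideanSpace ℝ (Fin k) :=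
  LinearMap.toContinuousLinearMap (Matrix.toEuclideanLin M)

lemma specNorm_clm {k l : ℕ} (M : Matrix (Fin k) (Fin l) ℝ) : specNorm M = ‖clm M‖ := rfl

noncomputable def mv {k l : ℕ} (M : Matrix (Fin k) (Fin l) ℝ) (x : EuclideanSpace ℝ (Fin l)) :
    EuclideanSpace ℝ (Fin k) := Matrix.toEuclideanLin M x

lemma clm_apply {k l : ℕ} (M : Matrix (Fin k) (Fin l) ℝ) (x) : clm M x = mv M x := rfl

lemma mv_mul {k l o : ℕ} (M : Matrix (Fin k) (Fin l) ℝ) (N : Matrix (Fin l) (Fin o) ℝ) (x) :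
    mv (M * N) x = mv M (mv N x) := by
  simp [mv, Matrix.toEuclideanLin_apply, Matrix.mulVec_mulVec]

lemma mv_sub {k l : ℕ} (M N : Matrix (Fin k) (Fin l) ℝ) (x) :
    mv (M - N) x = mv M x - mv N x := by
  simp [mv, map_sub]

lemma mv_sub_vec {k l : ℕ} (M : Matrix (Fin k) (Fin l) ℝ) (x y) :
    mv M (x - y) = mv M x - mv M y := by simp [mv, map_sub]

lemma mv_smul_vec {k l : ℕ} (M : Matrix (Fin k) (Fin l) ℝ) (t : ℝ) (x) :
    mv M (t • x) = t • mv M x := by simp [mv, _root_.map_smul]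

lemma mv_zero {k l : ℕ} (M : Matrix (Fin k) (Fin l) ℝ) : mv M 0 = 0 := by simp [mv, map_zero]

lemma mv_one {k : ℕ} (x : EuclideanSpace ℝ (Fin k)) : mv 1 x = x := by
  simp [mv, Matrix.toEuclideanLin_apply]

lemma norm_mv_le {k l : ℕ} (M : Matrix (Fin k) (Fin l) ℝ) (x) :
    ‖mv M x‖ ≤ specNorm M * ‖x‖ := (clm M).le_opNorm x

lemma specNorm_nonneg {k l : ℕ} (M : Matrix (Fin k) (Fin l) ℝ) : 0 ≤ specNorm M :=
  norm_nonneg (clm M)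

lemma opnorm_le {k l : ℕ} (M : Matrix (Fin k) (Fin l) ℝ) {c : ℝ} (hc : 0 ≤ c)
    (h : ∀ x, ‖mv M x‖ ≤ c * ‖x‖) : specNorm M ≤ c :=
  ContinuousLinearMap.opNorm_le_bound _ hc h

lemma specNorm_mul_le {k l o : ℕ} (M : Matrix (Fin k) (Fin l) ℝ) (N : Matrix (Fin l) (Fin o) ℝ) :
    specNorm (M * N) ≤ specNorm M * specNorm N := by
  have hcomp : clm (M * N) = (clm M).comp (clm N) := by
    refine ContinuousLinearMap.ext fun x => ?_
    exact mv_mul M N x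
  rw [specNorm_clm, hcomp]
  exact ContinuousLinearMap.opNorm_comp_le _ _

lemma specNorm_transpose {k l : ℕ} (M : Matrix (Fin k) (Fin l) ℝ) :
    specNorm Mᵀ = specNorm M := by
  rw [specNorm, ← Matrix.conjTranspose_eq_transpose_of_trivial,
    Matrix.toEuclideanLin_conjTranspose_eq_adjoint, LinearMap.adjoint_toContinuousLinearMap]
  exact ContinuousLinearMap.adjoint.norm_map _

lemma specNorm_sub_rev {k l : ℕ} (M N : Matrix (Fin k) (Fin l) ℝ) :
    specNorm (M - N) = specNorm (N - M) := by
  have h : clm (M - N) = -(clm (N - M)) := by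
    refine ContinuousLinearMap.ext fun x => ?_
    show mv (M - N) x = -(mv (N - M) x)
    rw [mv_sub, mv_sub]
    abel
  rw [specNorm_clm, h, norm_neg, specNorm_clm]

lemma inner_mv {k l : ℕ} (M : Matrix (Fin k) (Fin l) ℝ) (x) (y) :
    ⟪mv M x, y⟫ = ⟪x, mv Mᵀ y⟫ := by
  rw [mv, mv, ← Matrix.conjTranspose_eq_transpose_of_trivial,
    Matrix.toEuclideanLin_conjTranspose_eq_adjoint, LinearMap.adjoint_inner_right]

lemma frank {k l : ℕ} (M : Matrix (Fin k) (Fin l) ℝ) :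
    M.rank = Module.finrank ℝ (LinearMap.range (Matrix.toEuclideanLin M)) := by
  rw [Matrix.toEuclideanLin_eq_toLin]
  exact Matrix.rank_eq_finrank_range_toLin M _ _

lemma sq_le_imp {a b : ℝ} (ha : 0 ≤ a) (hb : 0 ≤ b) (h : a ^ 2 ≤ b ^ 2) : a ≤ b :=
  (pow_le_pow_iff_left₀ ha hb two_ne_zero).mp h

section Proj
variable {k : ℕ} {r : Matrix (Fin k) (Fin k) ℝ}

lemma proj_orth (hsym : rᵀ = r) (hid : r * r = r) (x y : EuclideanSpace ℝ (Fin k)) :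
    ⟪x - mv r x, mv r y⟫ = 0 := by
  rw [inner_sub_left, inner_mv, ← mv_mul, hsym, hid]
  ring

lemma proj_pyth (hsym : rᵀ = r) (hid : r * r = r) (x : EuclideanSpace ℝ (Fin k)) :
    ‖mv r x‖ ^ 2 + ‖x - mv r x‖ ^ 2 = ‖x‖ ^ 2 := by
  have h : ⟪mv r x, x - mv r x⟫ = 0 := by
    rw [real_inner_comm]; exact proj_orth hsym hid x x
  have := norm_add_sq_real (mv r x) (x - mv r x)
  simp only [add_sub_cancel, h] at this
  linarith

lemma proj_min (hsym : rᵀ = r) (hid : r * r = r) (x z : EuclideanSpace ℝ (Fin k)) :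
    ‖x - mv r x‖ ≤ ‖x - mv r z‖ := by
  have hdec : x - mv r z = (x - mv r x) + mv r (x - z) := by
    rw [mv_sub_vec]; abel
  have h : ⟪x - mv r x, mv r (x - z)⟫ = 0 := proj_orth hsym hid x (x - z)
  have hsq : ‖x - mv r z‖ ^ 2 = ‖x - mv r x‖ ^ 2 + ‖mv r (x - z)‖ ^ 2 := by
    rw [hdec, norm_add_sq_real, h]; ring
  refine sq_le_imp (norm_nonneg _) (norm_nonneg _) ?_
  rw [hsq]; nlinarith [sq_nonneg ‖mv r (x - z)‖]

lemma proj_norm_le (hsym : rᵀ = r) (hid : r * r = r) (x : EuclideanSpace ℝ (Fin k)) :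
    ‖mv r x‖ ≤ ‖x‖ := by
  have := proj_pyth hsym hid x
  refine sq_le_imp (norm_nonneg _) (norm_nonneg _) ?_
  nlinarith [sq_nonneg ‖x - mv r x‖]

lemma proj_fix (hid : r * r = r) {x : EuclideanSpace ℝ (Fin k)}
    (hx : x ∈ LinearMap.range (Matrix.toEuclideanLin r)) : mv r x = x := by
  obtain ⟨y, rfl⟩ := hx
  show mv r (mv r y) = mv r y
  rw [← mv_mul, hid]

end Proj

lemma key_arith (a b c : ℝ) (ha : 0 < a) (hb : 0 ≤ b) (h : b ≤ c ^ 2 * (a + b)) :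
    (1 - a / (a + b)) ^ 2 * a + (a / (a + b)) ^ 2 * b ≤ c ^ 2 * a := by
  have hs : 0 < a + b := by linarith
  have h1 : 1 - a / (a + b) = b / (a + b) := by field_simp; ring
  rw [h1, div_pow, div_pow, div_mul_eq_mul_div, div_mul_eq_mul_div, ← add_div,
    div_le_iff₀ (by positivity)]
  nlinarith [mul_le_mul_of_nonneg_left h (by positivity : (0:ℝ) ≤ a * (a + b))]

lemma sine {k : ℕ} {p q : Matrix (Fin k) (Fin k) ℝ}
    (hps : pᵀ = p) (hp2 : p * p = p) (hqs : qᵀ = q) (hq2 : q * q = q)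
    (hrk : Module.finrank ℝ (LinearMap.range (Matrix.toEuclideanLin p)) =
      Module.finrank ℝ (LinearMap.range (Matrix.toEuclideanLin q)))
    {c : ℝ} (hc : 0 ≤ c)
    (hyp : ∀ x, ‖mv q x - mv p (mv q x)‖ ≤ c * ‖mv q x‖) :
    ∀ x, ‖mv p x - mv q (mv p x)‖ ≤ c * ‖mv p x‖ := by
  intro x
  set v := mv p x with hv
  rcases le_or_gt 1 c with hc1 | hc1
  · calc ‖v - mv q v‖ ≤ ‖v - mv q 0‖ := proj_min hqs hq2 v 0
      _ = ‖v‖ := by rw [mv_zero, sub_zero]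
      _ ≤ c * ‖v‖ := le_mul_of_one_le_left (norm_nonneg _) hc1
  · set Sq := LinearMap.range (Matrix.toEuclideanLin q) with hSq
    set φ : Sq →ₗ[ℝ] EuclideanSpace ℝ (Fin k) :=
      (Matrix.toEuclideanLin p).comp Sq.subtype with hφ
    have hinj : Function.Injective φ := by
      rw [← LinearMap.ker_eq_bot]
      apply LinearMap.ker_eq_bot'.mpr
      intro u hu
      have hqu : mv q (u : EuclideanSpace ℝ (Fin k)) = u := proj_fix hq2 u.2
      have h1 := hyp (u : EuclideanSpace ℝ (Fin k))
      rw [hqu] at h1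
      have hpu : mv p (u : EuclideanSpace ℝ (Fin k)) = 0 := hu
      rw [hpu, sub_zero] at h1
      have : ‖(u : EuclideanSpace ℝ (Fin k))‖ = 0 := by
        nlinarith [norm_nonneg (u : EuclideanSpace ℝ (Fin k))]
      ext1
      exact norm_eq_zero.mp this
    have hrange : Submodule.map (Matrix.toEuclideanLin p) Sq =
        LinearMap.range (Matrix.toEuclideanLin p) := by
      apply Submodule.eq_of_le_of_finrank_eq (LinearMap.map_le_range)
      have h1 : Submodule.map (Matrix.toEuclideanLin p) Sq = LinearMap.range φ := by
        rw [hφ, LinearMap.range_comp, Submodule.range_subtype]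
      rw [h1, LinearMap.finrank_range_of_inj hinj, ← hrk]
    obtain ⟨u, hu_mem, hu⟩ : ∃ u ∈ Sq, mv p u = v := by
      have hv_mem : v ∈ LinearMap.range (Matrix.toEuclideanLin p) := ⟨x, rfl⟩
      rw [← hrange] at hv_mem
      exact hv_mem
    have hqu : mv q u = u := proj_fix hq2 hu_mem
    have hw : ‖u - v‖ ≤ c * ‖u‖ := by
      have h1 := hyp u; rw [hqu, hu] at h1; exact h1
    have hpyth_u : ‖v‖ ^ 2 + ‖u - v‖ ^ 2 = ‖u‖ ^ 2 := by
      have h1 := proj_pyth hps hp2 u; rw [hu] at h1; exact h1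
    by_cases hv0 : v = 0
    · simp [hv0, mv_zero]
    · set a := ‖v‖ ^ 2 with hadef
      set b := ‖u - v‖ ^ 2 with hbdef
      have ha : 0 < a := pow_pos (norm_pos_iff.mpr hv0) 2
      have hb : 0 ≤ b := sq_nonneg _
      have hab : a + b = ‖u‖ ^ 2 := hpyth_u
      have hs : 0 < a + b := by linarith
      have hb_le : b ≤ c ^ 2 * (a + b) := by
        rw [hab]
        calc b = ‖u - v‖ ^ 2 := rfl
          _ ≤ (c * ‖u‖) ^ 2 := by
              apply pow_le_pow_left₀ (norm_nonneg _) hw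
          _ = c ^ 2 * ‖u‖ ^ 2 := by ring
      set t : ℝ := a / (a + b) with ht
      have hqz : mv q (t • u) = t • u := by rw [mv_smul_vec, hqu]
      have hvw_orth : ⟪v, u - v⟫ = 0 := by
        have h1 := proj_orth hps hp2 u x
        rw [hu, ← hv] at h1
        rw [real_inner_comm]
        exact h1
      have hdecomp : v - t • u = (1 - t) • v - t • (u - v) := by module
      have hnormsq : ‖v - t • u‖ ^ 2 = (1 - t) ^ 2 * a + t ^ 2 * b := by
        rw [hdecomp, norm_sub_sq_real, real_inner_smul_left, real_inner_smul_right, hvw_orth,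
          norm_smul, norm_smul]
        simp only [mul_zero, Real.norm_eq_abs]
        rw [mul_pow, mul_pow, sq_abs, sq_abs]
        ring
      have hkey : (1 - t) ^ 2 * a + t ^ 2 * b ≤ c ^ 2 * a := key_arith a b c ha hb hb_le
      calc ‖v - mv q v‖ ≤ ‖v - mv q (t • u)‖ := proj_min hqs hq2 v (t • u)
        _ ≤ c * ‖v‖ := by
            rw [hqz]
            refine sq_le_imp (norm_nonneg _) (by positivity) ?_
            rw [hnormsq, mul_pow]
            exact hkey

set_option maxHeartbeats 1600000 in
theorem stmt10 (m n : ℕ) (A B : Matrix (Fin m) (Fin n) ℝ) (hrank : A.rank = B.rank)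
    (Ad Bd : Matrix (Fin n) (Fin m) ℝ) (hAd : IsMPInv A Ad) (hBd : IsMPInv B Bd) :
    specNorm (Ad - Bd) ≤ 2 * specNorm Ad * specNorm Bd * specNorm (A - B) := by
  obtain ⟨hA1, hA2, hA3, hA4⟩ := hAd
  obtain ⟨hB1, hB2, hB3, hB4⟩ := hBd
  -- idempotency of the four projections
  have hP2 : (A*Ad)*(A*Ad) = A*Ad := by rw [← Matrix.mul_assoc, hA1]
  have hQ2 : (B*Bd)*(B*Bd) = B*Bd := by rw [← Matrix.mul_assoc, hB1]
  have hP'2 : (Ad*A)*(Ad*A) = Ad*A := by rw [← Matrix.mul_assoc, hA2]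
  have hQ'2 : (Bd*B)*(Bd*B) = Bd*B := by rw [← Matrix.mul_assoc, hB2]
  -- absorption identities
  have hAdP : Ad*(A*Ad) = Ad := by rw [← Matrix.mul_assoc]; exact hA2
  have hBdQ : Bd*(B*Bd) = Bd := by rw [← Matrix.mul_assoc]; exact hB2
  -- rank identities
  have hrkP : (A*Ad).rank = A.rank := by
    refine le_antisymm (Matrix.rank_mul_le_left A Ad) ?_
    have h := Matrix.rank_mul_le_left (A*Ad) A
    rw [hA1] at h; exact h
  have hrkQ : (B*Bd).rank = B.rank := by
    refine le_antisymm (Matrix.rank_mul_le_left B Bd) ?_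
    have h := Matrix.rank_mul_le_left (B*Bd) B
    rw [hB1] at h; exact h
  have hrkP' : (Ad*A).rank = A.rank := by
    refine le_antisymm (Matrix.rank_mul_le_right Ad A) ?_
    have e : A*(Ad*A) = A := by rw [← Matrix.mul_assoc]; exact hA1
    have h := Matrix.rank_mul_le_right A (Ad*A)
    rw [e] at h; exact h
  have hrkQ' : (Bd*B).rank = B.rank := by
    refine le_antisymm (Matrix.rank_mul_le_right Bd B) ?_
    have e : B*(Bd*B) = B := by rw [← Matrix.mul_assoc]; exact hB1
    have h := Matrix.rank_mul_le_right B (Bd*B)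
    rw [e] at h; exact h
  have frPQ : Module.finrank ℝ (LinearMap.range (Matrix.toEuclideanLin (A*Ad))) =
      Module.finrank ℝ (LinearMap.range (Matrix.toEuclideanLin (B*Bd))) := by
    rw [← frank, ← frank, hrkP, hrkQ, hrank]
  have frQ'P' : Module.finrank ℝ (LinearMap.range (Matrix.toEuclideanLin (Bd*B))) =
      Module.finrank ℝ (LinearMap.range (Matrix.toEuclideanLin (Ad*A))) := by
    rw [← frank, ← frank, hrkQ', hrkP', hrank]
  have hc1 : (0:ℝ) ≤ specNorm (A-B) * specNorm Bd :=
    mul_nonneg (specNorm_nonneg _) (specNorm_nonneg _)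
  have hc2 : (0:ℝ) ≤ specNorm (A-B) * specNorm Ad :=
    mul_nonneg (specNorm_nonneg _) (specNorm_nonneg _)
  -- First sine application : hypothesis on (1-P)Q
  have hyp1 : ∀ x, ‖mv (B*Bd) x - mv (A*Ad) (mv (B*Bd) x)‖ ≤
      (specNorm (A-B) * specNorm Bd) * ‖mv (B*Bd) x‖ := by
    have hNQ : ((B-A)*Bd)*(B*Bd) = (B-A)*Bd := by rw [Matrix.mul_assoc, hBdQ]
    have e : (B-A)*Bd - (A*Ad)*((B-A)*Bd) =
        (B*Bd - (A*Ad)*(B*Bd)) + ((A*Ad*A - A)*Bd) := by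
      simp only [Matrix.sub_mul, Matrix.mul_sub, Matrix.mul_assoc]
      abel
    rw [hA1] at e
    simp only [sub_self, Matrix.zero_mul, add_zero] at e
    have emat : B*Bd - (A*Ad)*(B*Bd) =
        ((B-A)*Bd)*(B*Bd) - (A*Ad)*(((B-A)*Bd)*(B*Bd)) := by rw [hNQ]; exact e.symm
    intro x
    have hrw : mv (B*Bd) x - mv (A*Ad) (mv (B*Bd) x) =
        mv ((B-A)*Bd) (mv (B*Bd) x) - mv (A*Ad) (mv ((B-A)*Bd) (mv (B*Bd) x)) := by
      have h0 := congrArg (fun M => mv M x) emat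
      simpa only [mv_sub, mv_mul] using h0
    rw [hrw]
    calc ‖mv ((B-A)*Bd) (mv (B*Bd) x) - mv (A*Ad) (mv ((B-A)*Bd) (mv (B*Bd) x))‖
        ≤ ‖mv ((B-A)*Bd) (mv (B*Bd) x) - mv (A*Ad) 0‖ :=
          proj_min hA3 hP2 (mv ((B-A)*Bd) (mv (B*Bd) x)) 0
      _ = ‖mv ((B-A)*Bd) (mv (B*Bd) x)‖ := by rw [mv_zero, sub_zero]
      _ ≤ specNorm ((B-A)*Bd) * ‖mv (B*Bd) x‖ := norm_mv_le _ _
      _ ≤ (specNorm (A-B) * specNorm Bd) * ‖mv (B*Bd) x‖ := by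
          refine mul_le_mul_of_nonneg_right ?_ (norm_nonneg _)
          calc specNorm ((B-A)*Bd) ≤ specNorm (B-A) * specNorm Bd := specNorm_mul_le _ _
            _ = specNorm (A-B) * specNorm Bd := by rw [specNorm_sub_rev]
  have concl1 := sine hA3 hP2 hB3 hQ2 frPQ hc1 hyp1
  have hop1 : specNorm ((1 - B*Bd)*(A*Ad)) ≤ specNorm (A-B) * specNorm Bd := by
    refine opnorm_le _ hc1 fun x => ?_
    have h1 : mv ((1 - B*Bd)*(A*Ad)) x = mv (A*Ad) x - mv (B*Bd) (mv (A*Ad) x) := by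
      rw [mv_mul, mv_sub, mv_one]
    rw [h1]
    calc ‖mv (A*Ad) x - mv (B*Bd) (mv (A*Ad) x)‖
        ≤ (specNorm (A-B) * specNorm Bd) * ‖mv (A*Ad) x‖ := concl1 x
      _ ≤ (specNorm (A-B) * specNorm Bd) * ‖x‖ :=
          mul_le_mul_of_nonneg_left (proj_norm_le hA3 hP2 x) hc1
  have hop1t : specNorm ((A*Ad)*(1 - B*Bd)) ≤ specNorm (A-B) * specNorm Bd := by
    have ht : ((1 - B*Bd)*(A*Ad))ᵀ = (A*Ad)*(1 - B*Bd) := by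
      rw [Matrix.transpose_mul, hA3, Matrix.transpose_sub, Matrix.transpose_one, hB3]
    calc specNorm ((A*Ad)*(1 - B*Bd)) = specNorm (((1 - B*Bd)*(A*Ad))ᵀ) := by rw [ht]
      _ = specNorm ((1 - B*Bd)*(A*Ad)) := specNorm_transpose _
      _ ≤ specNorm (A-B) * specNorm Bd := hop1
  -- Second sine application : hypothesis on (1-Q')P'
  have hAdtP' : Adᵀ*(Ad*A) = Adᵀ := by
    rw [← hA4, ← Matrix.transpose_mul, hA2]
  have hQ'Bt : (Bd*B)*Bᵀ = Bᵀ := by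
    rw [← hB4, ← Matrix.transpose_mul, ← Matrix.mul_assoc, hB1]
  have hAtAdt : Aᵀ*Adᵀ = Ad*A := by rw [← Matrix.transpose_mul, hA4]
  have hyp2 : ∀ x, ‖mv (Ad*A) x - mv (Bd*B) (mv (Ad*A) x)‖ ≤
      (specNorm (A-B) * specNorm Ad) * ‖mv (Ad*A) x‖ := by
    have hNP : ((A-B)ᵀ*Adᵀ)*(Ad*A) = (A-B)ᵀ*Adᵀ := by rw [Matrix.mul_assoc, hAdtP']
    have h1 : (A-B)ᵀ*Adᵀ = Ad*A - Bᵀ*Adᵀ := by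
      rw [Matrix.transpose_sub, Matrix.sub_mul, hAtAdt]
    have h2 : (Bd*B)*(Bᵀ*Adᵀ) = Bᵀ*Adᵀ := by rw [← Matrix.mul_assoc, hQ'Bt]
    have e2 : (A-B)ᵀ*Adᵀ - (Bd*B)*((A-B)ᵀ*Adᵀ) = Ad*A - (Bd*B)*(Ad*A) := by
      rw [h1, Matrix.mul_sub, h2]; abel
    have emat : Ad*A - (Bd*B)*(Ad*A) =
        ((A-B)ᵀ*Adᵀ)*(Ad*A) - (Bd*B)*(((A-B)ᵀ*Adᵀ)*(Ad*A)) := by rw [hNP]; exact e2.symm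
    intro x
    have hrw : mv (Ad*A) x - mv (Bd*B) (mv (Ad*A) x) =
        mv ((A-B)ᵀ*Adᵀ) (mv (Ad*A) x) - mv (Bd*B) (mv ((A-B)ᵀ*Adᵀ) (mv (Ad*A) x)) := by
      have h0 := congrArg (fun M => mv M x) emat
      simpa only [mv_sub, mv_mul] using h0
    rw [hrw]
    calc ‖mv ((A-B)ᵀ*Adᵀ) (mv (Ad*A) x) - mv (Bd*B) (mv ((A-B)ᵀ*Adᵀ) (mv (Ad*A) x))‖
        ≤ ‖mv ((A-B)ᵀ*Adᵀ) (mv (Ad*A) x) - mv (Bd*B) 0‖ :=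
          proj_min hB4 hQ'2 (mv ((A-B)ᵀ*Adᵀ) (mv (Ad*A) x)) 0
      _ = ‖mv ((A-B)ᵀ*Adᵀ) (mv (Ad*A) x)‖ := by rw [mv_zero, sub_zero]
      _ ≤ specNorm ((A-B)ᵀ*Adᵀ) * ‖mv (Ad*A) x‖ := norm_mv_le _ _
      _ ≤ (specNorm (A-B) * specNorm Ad) * ‖mv (Ad*A) x‖ := by
          refine mul_le_mul_of_nonneg_right ?_ (norm_nonneg _)
          calc specNorm ((A-B)ᵀ*Adᵀ) ≤ specNorm ((A-B)ᵀ) * specNorm (Adᵀ) :=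
                specNorm_mul_le _ _
            _ = specNorm (A-B) * specNorm Ad := by
                rw [specNorm_transpose, specNorm_transpose]
  have concl2 := sine hB4 hQ'2 hA4 hP'2 frQ'P' hc2 hyp2
  have hop2 : specNorm ((1 - Ad*A)*(Bd*B)) ≤ specNorm (A-B) * specNorm Ad := by
    refine opnorm_le _ hc2 fun x => ?_
    have h1 : mv ((1 - Ad*A)*(Bd*B)) x = mv (Bd*B) x - mv (Ad*A) (mv (Bd*B) x) := by
      rw [mv_mul, mv_sub, mv_one]
    rw [h1]
    calc ‖mv (Bd*B) x - mv (Ad*A) (mv (Bd*B) x)‖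
        ≤ (specNorm (A-B) * specNorm Ad) * ‖mv (Bd*B) x‖ := concl2 x
      _ ≤ (specNorm (A-B) * specNorm Ad) * ‖x‖ :=
          mul_le_mul_of_nonneg_left (proj_norm_le hB4 hQ'2 x) hc2
  -- main decomposition
  have hD : Ad - Bd = Ad*((A*Ad)*(1-(B*Bd))) - ((1-(Ad*A))*(Bd*B))*Bd
      - (Ad*((A-B)*Bd))*(B*Bd) := by
    have h1 : Ad*((A*Ad)*(1-(B*Bd))) = Ad*(1-(B*Bd)) := by rw [← Matrix.mul_assoc, hAdP]
    have h2 : ((1-(Ad*A))*(Bd*B))*Bd = (1-(Ad*A))*Bd := by rw [Matrix.mul_assoc, hB2]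
    have h3 : (Ad*((A-B)*Bd))*(B*Bd) = Ad*((A-B)*Bd) := by
      rw [Matrix.mul_assoc, Matrix.mul_assoc, hBdQ]
    rw [h1, h2, h3]
    simp only [Matrix.mul_sub, Matrix.sub_mul, Matrix.mul_one, Matrix.one_mul,
      Matrix.mul_assoc]
    abel
  refine opnorm_le _ (mul_nonneg (mul_nonneg (mul_nonneg (by norm_num) (specNorm_nonneg Ad))
    (specNorm_nonneg Bd)) (specNorm_nonneg (A-B))) fun x => ?_
  have hxq : mv (1-(B*Bd)) x = x - mv (B*Bd) x := by rw [mv_sub, mv_one]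
  have hst : ‖mv (B*Bd) x‖^2 + ‖mv (1-(B*Bd)) x‖^2 = ‖x‖^2 := by
    rw [hxq]; exact proj_pyth hB3 hQ2 x
  have h1mQ : (1-(B*Bd))*(1-(B*Bd)) = 1-(B*Bd) := by
    have h := hQ2
    calc (1-(B*Bd))*(1-(B*Bd)) = 1 - B*Bd - B*Bd + (B*Bd)*(B*Bd) := by noncomm_ring
      _ = 1-(B*Bd) := by rw [h]; abel
  have hM2idem : ((A*Ad)*(1-(B*Bd)))*(1-(B*Bd)) = (A*Ad)*(1-(B*Bd)) := by
    rw [Matrix.mul_assoc, h1mQ]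
  -- the three pieces
  have hDx : mv (Ad - Bd) x =
      (mv Ad (mv (A*Ad) (mv (1-(B*Bd)) x)) - mv Ad (mv (A-B) (mv Bd (mv (B*Bd) x))))
      - mv (1-(Ad*A)) (mv (Bd*B) (mv Bd x)) := by
    rw [hD]
    simp only [mv_sub, mv_mul, mv_one]
    abel
  -- orthogonality
  have horth : ⟪mv Ad (mv (A*Ad) (mv (1-(B*Bd)) x)) - mv Ad (mv (A-B) (mv Bd (mv (B*Bd) x))),
      mv (1-(Ad*A)) (mv (Bd*B) (mv Bd x))⟫ = 0 := by
    have hay : mv Ad (mv (A*Ad) (mv (1-(B*Bd)) x)) - mv Ad (mv (A-B) (mv Bd (mv (B*Bd) x)))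
        = mv Ad (mv (A*Ad) (mv (1-(B*Bd)) x) - mv (A-B) (mv Bd (mv (B*Bd) x))) := by
      rw [mv_sub_vec]
    have haP' : mv (Ad*A) (mv Ad (mv (A*Ad) (mv (1-(B*Bd)) x) - mv (A-B) (mv Bd (mv (B*Bd) x))))
        = mv Ad (mv (A*Ad) (mv (1-(B*Bd)) x) - mv (A-B) (mv Bd (mv (B*Bd) x))) := by
      rw [← mv_mul, hA2]
    have hb0 : mv (1-(Ad*A)) (mv (Bd*B) (mv Bd x)) =
        mv (Bd*B) (mv Bd x) - mv (Ad*A) (mv (Bd*B) (mv Bd x)) := by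
      rw [mv_sub, mv_one]
    have h0 := proj_orth hA4 hP'2 (mv (Bd*B) (mv Bd x))
      (mv Ad (mv (A*Ad) (mv (1-(B*Bd)) x) - mv (A-B) (mv Bd (mv (B*Bd) x))))
    rw [haP'] at h0
    rw [hay, hb0, real_inner_comm]
    exact h0
  -- norm bounds
  have ha1 : ‖mv Ad (mv (A*Ad) (mv (1-(B*Bd)) x))‖ ≤
      specNorm Ad * ((specNorm (A-B) * specNorm Bd) * ‖mv (1-(B*Bd)) x‖) := by
    calc ‖mv Ad (mv (A*Ad) (mv (1-(B*Bd)) x))‖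
        ≤ specNorm Ad * ‖mv (A*Ad) (mv (1-(B*Bd)) x)‖ := norm_mv_le _ _
      _ ≤ specNorm Ad * ((specNorm (A-B) * specNorm Bd) * ‖mv (1-(B*Bd)) x‖) := by
          refine mul_le_mul_of_nonneg_left ?_ (specNorm_nonneg _)
          have hw : mv (A*Ad) (mv (1-(B*Bd)) x) =
              mv ((A*Ad)*(1-(B*Bd))) (mv (1-(B*Bd)) x) := by
            rw [← mv_mul]
            conv_lhs => rw [← hM2idem]
            rw [mv_mul]
          rw [hw]
          calc ‖mv ((A*Ad)*(1-(B*Bd))) (mv (1-(B*Bd)) x)‖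
              ≤ specNorm ((A*Ad)*(1-(B*Bd))) * ‖mv (1-(B*Bd)) x‖ := norm_mv_le _ _
            _ ≤ (specNorm (A-B) * specNorm Bd) * ‖mv (1-(B*Bd)) x‖ :=
                mul_le_mul_of_nonneg_right hop1t (norm_nonneg _)
  have ha2 : ‖mv Ad (mv (A-B) (mv Bd (mv (B*Bd) x)))‖ ≤
      specNorm Ad * (specNorm (A-B) * (specNorm Bd * ‖mv (B*Bd) x‖)) := by
    calc ‖mv Ad (mv (A-B) (mv Bd (mv (B*Bd) x)))‖
        ≤ specNorm Ad * ‖mv (A-B) (mv Bd (mv (B*Bd) x))‖ := norm_mv_le _ _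
      _ ≤ specNorm Ad * (specNorm (A-B) * (specNorm Bd * ‖mv (B*Bd) x‖)) := by
          refine mul_le_mul_of_nonneg_left ?_ (specNorm_nonneg _)
          calc ‖mv (A-B) (mv Bd (mv (B*Bd) x))‖
              ≤ specNorm (A-B) * ‖mv Bd (mv (B*Bd) x)‖ := norm_mv_le _ _
            _ ≤ specNorm (A-B) * (specNorm Bd * ‖mv (B*Bd) x‖) :=
                mul_le_mul_of_nonneg_left (norm_mv_le _ _) (specNorm_nonneg _)
  have hb : ‖mv (1-(Ad*A)) (mv (Bd*B) (mv Bd x))‖ ≤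
      (specNorm (A-B) * specNorm Ad) * (specNorm Bd * ‖mv (B*Bd) x‖) := by
    have hBdx : mv Bd x = mv Bd (mv (B*Bd) x) := by
      conv_lhs => rw [← hBdQ]
      rw [mv_mul]
    have hb0' : mv (1-(Ad*A)) (mv (Bd*B) (mv Bd x)) =
        mv ((1-(Ad*A))*(Bd*B)) (mv Bd (mv (B*Bd) x)) := by
      rw [mv_mul (1-(Ad*A)) (Bd*B), hBdx]
    rw [hb0']
    calc ‖mv ((1-(Ad*A))*(Bd*B)) (mv Bd (mv (B*Bd) x))‖
        ≤ specNorm ((1-(Ad*A))*(Bd*B)) * ‖mv Bd (mv (B*Bd) x)‖ := norm_mv_le _ _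
      _ ≤ (specNorm (A-B) * specNorm Ad) * (specNorm Bd * ‖mv (B*Bd) x‖) :=
          mul_le_mul hop2 (norm_mv_le _ _) (norm_nonneg _) hc2
  -- combine
  have heq : ‖mv (Ad - Bd) x‖^2 =
      ‖mv Ad (mv (A*Ad) (mv (1-(B*Bd)) x)) - mv Ad (mv (A-B) (mv Bd (mv (B*Bd) x)))‖^2
      + ‖mv (1-(Ad*A)) (mv (Bd*B) (mv Bd x))‖^2 := by
    rw [hDx, norm_sub_sq_real, horth]; ring
  have hatot : ‖mv Ad (mv (A*Ad) (mv (1-(B*Bd)) x)) - mv Ad (mv (A-B) (mv Bd (mv (B*Bd) x)))‖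
      ≤ specNorm Ad * ((specNorm (A-B) * specNorm Bd) * ‖mv (1-(B*Bd)) x‖)
        + specNorm Ad * (specNorm (A-B) * (specNorm Bd * ‖mv (B*Bd) x‖)) :=
    (norm_sub_le _ _).trans (add_le_add ha1 ha2)
  refine sq_le_imp (norm_nonneg _) (mul_nonneg (mul_nonneg (mul_nonneg (mul_nonneg
    (by norm_num) (specNorm_nonneg Ad)) (specNorm_nonneg Bd)) (specNorm_nonneg (A-B)))
    (norm_nonneg x)) ?_
  rw [heq]
  have h1 : ‖mv Ad (mv (A*Ad) (mv (1-(B*Bd)) x)) - mv Ad (mv (A-B) (mv Bd (mv (B*Bd) x)))‖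
      ≤ (specNorm Ad * specNorm Bd * specNorm (A-B)) * (‖mv (1-(B*Bd)) x‖ + ‖mv (B*Bd) x‖) := by
    refine hatot.trans (le_of_eq ?_)
    ring
  have h2 : ‖mv (1-(Ad*A)) (mv (Bd*B) (mv Bd x))‖
      ≤ (specNorm Ad * specNorm Bd * specNorm (A-B)) * ‖mv (B*Bd) x‖ := by
    refine hb.trans (le_of_eq ?_)
    ring
  have h1sq := pow_le_pow_left₀ (norm_nonneg _) h1 2
  have h2sq := pow_le_pow_left₀ (norm_nonneg _) h2 2
  have hsn : (0:ℝ) ≤ ‖mv (B*Bd) x‖ := norm_nonneg _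
  have htn : (0:ℝ) ≤ ‖mv (1-(B*Bd)) x‖ := norm_nonneg _
  have hstep : (‖mv (1-(B*Bd)) x‖ + ‖mv (B*Bd) x‖)^2 + ‖mv (B*Bd) x‖^2 ≤ 4*‖x‖^2 := by
    nlinarith [sq_nonneg (‖mv (B*Bd) x‖ - ‖mv (1-(B*Bd)) x‖), mul_nonneg hsn htn, hst]
  calc ‖mv Ad (mv (A*Ad) (mv (1-(B*Bd)) x)) - mv Ad (mv (A-B) (mv Bd (mv (B*Bd) x)))‖^2
      + ‖mv (1-(Ad*A)) (mv (Bd*B) (mv Bd x))‖^2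
      ≤ ((specNorm Ad * specNorm Bd * specNorm (A-B)) * (‖mv (1-(B*Bd)) x‖ + ‖mv (B*Bd) x‖))^2
        + ((specNorm Ad * specNorm Bd * specNorm (A-B)) * ‖mv (B*Bd) x‖)^2 :=
        add_le_add h1sq h2sq
    _ = (specNorm Ad * specNorm Bd * specNorm (A-B))^2
        * ((‖mv (1-(B*Bd)) x‖ + ‖mv (B*Bd) x‖)^2 + ‖mv (B*Bd) x‖^2) := by ring
    _ ≤ (specNorm Ad * specNorm Bd * specNorm (A-B))^2 * (4*‖x‖^2) :=
        mul_le_mul_of_nonneg_left hstep (sq_nonneg _)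
    _ = (2 * specNorm Ad * specNorm Bd * specNorm (A-B) * ‖x‖)^2 := by ring
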